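/- Let λ1 ∈ Q_I^+, λ2 ∈ Q_I^{++}, and suppose μ1, μ2 ∈ V are subdominant to λ1 and λ2 respectively and ⟨μ1, μ2⟩ = ⟨λ1, λ2⟩. Then there exists w ∈ W with μ1 = wλ1 such that w sends α_i to a positive root for every i ∈ I (equivalently, w is the minimal length representative of its coset wW_I, i.e. w ∈ W^I). -/

import Mathlib

/-!
Combinatorial setup: a finite crystallographic root system `Φ` spanning a Euclidean
space `V`, with a chosen system of simple roots `α 1, …, α r`, simple coroots
`αᵛ i = (2/⟪α i, α i⟫) • α i`, Weyl group `W` (the subgroup of linear isometries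
generated by the reflections in the simple roots), dominant elements, and the notion
of `μ` being subdominant to a dominant `λ` (the dominant representative `μ⁺` of the
orbit `W μ` satisfies `λ - μ⁺ ∈ Σᵢ ℝ≥0 αᵛ i`).  `Q_I^+` is encoded via the pairings
with the simple coroots: `λ ∈ Q_I^+` iff `⟪λ, αᵛ j⟫ ∈ ℤ≥0` for all `j` and
`⟪λ, αᵛ j⟫ = 0` for `j ∈ I` (equivalently `λ = Σ_{i ∉ I} n_i ω_i`, `n_i ∈ ℤ≥0`,
where the `ω_i` are the fundamental weights, the dual basis to the simple coroots).
-/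

open scoped RealInnerProductSpace
set_option linter.unusedSectionVars false

/-- auxiliary reflection formula -/
theorem SSaux.reflection_span_orthogonal_apply {V : Type*} [NormedAddCommGroup V]
    [InnerProductSpace ℝ V] [FiniteDimensional ℝ V] (v x : V) :
    Submodule.reflection (ℝ ∙ v)ᗮ x = x - (2 * ⟪x, v⟫ / ⟪v, v⟫) • v := by
  rw [Submodule.reflection_apply, Submodule.starProjection_orthogonal_val,
    Submodule.starProjection_singleton]
  rw [real_inner_self_eq_norm_sq, real_inner_comm]
  simp only [RCLike.ofReal_real_eq_id, id_eq]
  rw [two_smul]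
  module

/-- A finite crystallographic root system spanning `V`, together with a choice of
system of simple roots `α 1, …, α r`. -/
structure SimpleSystem (V : Type*) [NormedAddCommGroup V] [InnerProductSpace ℝ V]
    (r : ℕ) where
  /-- the (finite) set of roots -/
  Φ : Finset V
  /-- the simple roots -/
  α : Fin r → V
  α_mem : ∀ i, α i ∈ Φ
  ne_zero : ∀ β ∈ Φ, β ≠ 0
  span_eq_top : Submodule.span ℝ (Φ : Set V) = ⊤
  indep : LinearIndependent ℝ α
  /-- every root is a nonnegative or a nonpositive combination of the simple roots -/
  base : ∀ β ∈ Φ, (∃ c : Fin r → ℝ, (∀ i, 0 ≤ c i) ∧ β = ∑ i, c i • α i) ∨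
      (∃ c : Fin r → ℝ, (∀ i, 0 ≤ c i) ∧ β = - ∑ i, c i • α i)
  /-- the crystallographic condition -/
  crystallographic : ∀ β ∈ Φ, ∀ γ ∈ Φ, ∃ n : ℤ, 2 * ⟪β, γ⟫ / ⟪γ, γ⟫ = (n : ℝ)
  /-- `Φ` is stable under the reflections `s_β` -/
  reflect_mem : ∀ β ∈ Φ, ∀ γ ∈ Φ, γ - (2 * ⟪γ, β⟫ / ⟪β, β⟫) • β ∈ Φ

namespace SimpleSystem

variable {V : Type*} [NormedAddCommGroup V] [InnerProductSpace ℝ V]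
  [FiniteDimensional ℝ V] {r : ℕ}

/-- The simple coroot `αᵛ i = 2 α i / ⟪α i, α i⟫`. -/
noncomputable def coroot (S : SimpleSystem V r) (i : Fin r) : V :=
  (2 / ⟪S.α i, S.α i⟫) • S.α i

/-- The simple reflection `s_i`: the orthogonal reflection in the hyperplane
orthogonal to the simple root `α i`. -/
noncomputable def simpleReflection (S : SimpleSystem V r) (i : Fin r) : V ≃ₗᵢ[ℝ] V :=
  Submodule.reflection (ℝ ∙ S.α i)ᗮ

/-- The Weyl group `W`, as a group of linear isometries of `V`. -/
def weylGroup (S : SimpleSystem V r) : Subgroup (V ≃ₗᵢ[ℝ] V) :=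
  Subgroup.closure (Set.range S.simpleReflection)

/-- `ξ ∈ V` is dominant if `⟪ξ, αᵛ i⟫ ≥ 0` for all `i`. -/
def IsDominant (S : SimpleSystem V r) (ξ : V) : Prop :=
  ∀ i, 0 ≤ ⟪ξ, S.coroot i⟫

/-- `μ` is subdominant to (the dominant element) `lam` if the dominant element `μ⁺`
of the orbit `W μ` satisfies `lam - μ⁺ ∈ Σᵢ ℝ≥0 • (αᵛ i)`. -/
def IsSubdominant (S : SimpleSystem V r) (lam μ : V) : Prop :=
  ∃ w ∈ S.weylGroup, S.IsDominant (w μ) ∧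
    ∃ c : Fin r → ℝ, (∀ i, 0 ≤ c i) ∧ lam - w μ = ∑ i, c i • S.coroot i

/-- Membership in `Q_I^+ = {Σ_{i ∈ Iᶜ} n_i ω_i : n_i ∈ ℤ≥0}`, characterized by the
pairings with the simple coroots: all of them are nonnegative integers, and those
indexed by `I` vanish. -/
def MemQplus (S : SimpleSystem V r) (I : Finset (Fin r)) (lam : V) : Prop :=
  ∀ j, (∃ n : ℕ, ⟪lam, S.coroot j⟫ = (n : ℝ)) ∧ (j ∈ I → ⟪lam, S.coroot j⟫ = 0)

/-- Membership in `Q_I^{++} = {Σ_{i ∈ Iᶜ} n_i ω_i : n_i ∈ ℤ>0}`. -/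
def MemQplusplus (S : SimpleSystem V r) (I : Finset (Fin r)) (lam : V) : Prop :=
  ∀ j, (j ∉ I → ∃ n : ℕ, 0 < n ∧ ⟪lam, S.coroot j⟫ = (n : ℝ)) ∧
    (j ∈ I → ⟪lam, S.coroot j⟫ = 0)

/-- `β` is a positive root: a root which is a nonnegative combination of the
simple roots. -/
def IsPositiveRoot (S : SimpleSystem V r) (β : V) : Prop :=
  β ∈ S.Φ ∧ ∃ c : Fin r → ℝ, (∀ i, 0 ≤ c i) ∧ β = ∑ i, c i • S.α i

variable (S : SimpleSystem V r)

lemma alpha_ne_zero (i : Fin r) : S.α i ≠ 0 := S.ne_zero _ (S.α_mem i)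

lemma inner_alpha_self_pos (i : Fin r) : 0 < ⟪S.α i, S.α i⟫ := by
  rw [real_inner_self_eq_norm_sq]
  exact pow_pos (norm_pos_iff.2 (S.alpha_ne_zero i)) 2

lemma sref_apply (i : Fin r) (x : V) :
    S.simpleReflection i x = x - (2 * ⟪x, S.α i⟫ / ⟪S.α i, S.α i⟫) • S.α i :=
  SSaux.reflection_span_orthogonal_apply _ _

lemma sref_alpha (i : Fin r) : S.simpleReflection i (S.α i) = - S.α i := by
  rw [S.sref_apply, mul_div_assoc, div_self (ne_of_gt (S.inner_alpha_self_pos i)),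
    mul_one, two_smul]
  module

lemma sref_mem {β : V} (i : Fin r) (hβ : β ∈ S.Φ) : S.simpleReflection i β ∈ S.Φ := by
  rw [S.sref_apply]
  exact S.reflect_mem (S.α i) (S.α_mem i) β hβ

lemma sref_sref (i : Fin r) (x : V) :
    S.simpleReflection i (S.simpleReflection i x) = x :=
  Submodule.reflection_involutive _ x

lemma sref_mul_self (i : Fin r) : S.simpleReflection i * S.simpleReflection i = 1 := by
  ext x; exact S.sref_sref i x

lemma sref_inv (i : Fin r) : (S.simpleReflection i)⁻¹ = S.simpleReflection i :=
  inv_eq_of_mul_eq_one_right (S.sref_mul_self i)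

lemma sref_mem_weylGroup (i : Fin r) : S.simpleReflection i ∈ S.weylGroup :=
  Subgroup.subset_closure ⟨i, rfl⟩

/-- the product of the simple reflections indexed by a list -/
noncomputable def word (l : List (Fin r)) : V ≃ₗᵢ[ℝ] V :=
  (l.map S.simpleReflection).prod

@[simp] lemma word_nil : S.word [] = 1 := rfl

lemma word_cons (i : Fin r) (l : List (Fin r)) :
    S.word (i :: l) = S.simpleReflection i * S.word l := by
  simp [word]

lemma word_concat (l : List (Fin r)) (j : Fin r) :
    S.word (l.concat j) = S.word l * S.simpleReflection j := by
  simp [word]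

lemma word_append (l₁ l₂ : List (Fin r)) :
    S.word (l₁ ++ l₂) = S.word l₁ * S.word l₂ := by
  simp [word]

lemma word_mem_weylGroup (l : List (Fin r)) : S.word l ∈ S.weylGroup := by
  induction l with
  | nil => exact one_mem _
  | cons i l ih => rw [word_cons]; exact mul_mem (S.sref_mem_weylGroup i) ih

lemma word_inv (l : List (Fin r)) : (S.word l)⁻¹ = S.word l.reverse := by
  induction l with
  | nil => simp
  | cons i l ih =>
    rw [word_cons, mul_inv_rev, ih, S.sref_inv, List.reverse_cons,
      ← List.concat_eq_append, word_concat]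

lemma word_root {β : V} (l : List (Fin r)) (hβ : β ∈ S.Φ) : S.word l β ∈ S.Φ := by
  induction l with
  | nil => simpa using hβ
  | cons i l ih =>
    rw [word_cons]
    exact S.sref_mem i ih

lemma exists_word {w : V ≃ₗᵢ[ℝ] V} (hw : w ∈ S.weylGroup) :
    ∃ l : List (Fin r), w = S.word l := by
  induction hw using Subgroup.closure_induction with
  | mem x hx => obtain ⟨i, rfl⟩ := hx; exact ⟨[i], by simp [word]⟩
  | one => exact ⟨[], rfl⟩
  | mul x y _ _ hx hy =>
    obtain ⟨l₁, rfl⟩ := hx; obtain ⟨l₂, rfl⟩ := hy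
    exact ⟨l₁ ++ l₂, (S.word_append l₁ l₂).symm⟩
  | inv x _ hx =>
    obtain ⟨l, rfl⟩ := hx
    exact ⟨l.reverse, S.word_inv l⟩

lemma mem_maps_root {w : V ≃ₗᵢ[ℝ] V} (hw : w ∈ S.weylGroup) {β : V} (hβ : β ∈ S.Φ) :
    w β ∈ S.Φ := by
  obtain ⟨l, rfl⟩ := S.exists_word hw
  exact S.word_root l hβ


/-- the cone of nonnegative combinations of simple roots -/
def InCone (x : V) : Prop :=
  ∃ c : Fin r → ℝ, (∀ i, 0 ≤ c i) ∧ x = ∑ i, c i • S.α i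

lemma incone_zero : S.InCone 0 :=
  ⟨fun _ => 0, fun _ => le_rfl, by simp⟩

lemma incone_add {x y : V} (hx : S.InCone x) (hy : S.InCone y) : S.InCone (x + y) := by
  obtain ⟨c, hc, rfl⟩ := hx; obtain ⟨d, hd, rfl⟩ := hy
  exact ⟨c + d, fun i => add_nonneg (hc i) (hd i), by
    rw [← Finset.sum_add_distrib]; congr 1; ext i; rw [Pi.add_apply, add_smul]⟩

lemma incone_smul {x : V} {t : ℝ} (ht : 0 ≤ t) (hx : S.InCone x) : S.InCone (t • x) := by
  obtain ⟨c, hc, rfl⟩ := hx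
  exact ⟨fun i => t * c i, fun i => mul_nonneg ht (hc i), by
    rw [Finset.smul_sum]; congr 1; ext i; rw [smul_smul]⟩

lemma incone_of_pos {β : V} (hβ : S.IsPositiveRoot β) : S.InCone β := hβ.2

lemma alpha_pos (i : Fin r) : S.IsPositiveRoot (S.α i) := by
  refine ⟨S.α_mem i, fun j => if j = i then 1 else 0, fun j => by positivity, ?_⟩
  simp [ite_smul]

lemma neg_mem {β : V} (hβ : β ∈ S.Φ) : -β ∈ S.Φ := by
  have h := S.reflect_mem β hβ β hβ
  have h2 : ⟪β, β⟫ ≠ 0 := by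
    rw [real_inner_self_eq_norm_sq]
    have := norm_pos_iff.2 (S.ne_zero β hβ)
    positivity
  rw [mul_div_assoc, div_self h2, mul_one, two_smul] at h
  convert h using 1
  module

lemma pos_or_negpos {β : V} (hβ : β ∈ S.Φ) :
    S.IsPositiveRoot β ∨ S.IsPositiveRoot (-β) := by
  rcases S.base β hβ with ⟨c, h0, he⟩ | ⟨c, h0, he⟩
  · exact Or.inl ⟨hβ, c, h0, he⟩
  · exact Or.inr ⟨S.neg_mem hβ, c, h0, by rw [he, neg_neg]⟩

lemma not_pos_and_negpos {β : V} (h1 : S.IsPositiveRoot β) (h2 : S.IsPositiveRoot (-β)) :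
    False := by
  obtain ⟨hm, c, hc, hcc⟩ := h1
  obtain ⟨_, d, hd, hdd⟩ := h2
  have hsum : ∑ i, (c i + d i) • S.α i = 0 := by
    have h : (∑ i, c i • S.α i) + (∑ i, d i • S.α i) = 0 := by rw [← hcc, ← hdd]; simp
    rw [← h, ← Finset.sum_add_distrib]
    congr 1; ext i; rw [add_smul]
  have hz := Fintype.linearIndependent_iff.1 S.indep (fun i => c i + d i) hsum
  have hc0 : ∀ i, c i = 0 := fun i => by
    have h0 : c i + d i = 0 := hz i
    have := hc i; have := hd i; linarith
  apply S.ne_zero β hm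
  rw [hcc]
  exact Finset.sum_eq_zero fun i _ => by rw [hc0 i, zero_smul]

lemma pos_smul {β : V} {t : ℝ} (ht : 0 ≤ t) (hβ : S.IsPositiveRoot β)
    (hm : t • β ∈ S.Φ) : S.IsPositiveRoot (t • β) := by
  obtain ⟨_, c, hc, rfl⟩ := hβ
  exact ⟨hm, fun i => t * c i, fun i => mul_nonneg ht (hc i), by
    rw [Finset.smul_sum]; congr 1; ext i; rw [smul_smul]⟩

/-- if a positive root is sent to a non-positive root by `s i`, it is a positive
multiple of `α i` -/
lemma sref_pos {β : V} (i : Fin r) (hβ : S.IsPositiveRoot β)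
    (hns : ¬ S.IsPositiveRoot (S.simpleReflection i β)) :
    ∃ c : ℝ, 0 < c ∧ β = c • S.α i := by
  obtain ⟨hm, c, hc, hcc⟩ := hβ
  have hsm : S.simpleReflection i β ∈ S.Φ := S.sref_mem i hm
  have hneg : S.IsPositiveRoot (-(S.simpleReflection i β)) :=
    (S.pos_or_negpos hsm).resolve_left hns
  obtain ⟨_, d, hd, hdd⟩ := hneg
  set m : ℝ := 2 * ⟪β, S.α i⟫ / ⟪S.α i, S.α i⟫ with hm'
  have key : ∑ j, (c j + d j - (if j = i then m else 0)) • S.α j = 0 := by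
    have e1 : S.simpleReflection i β = β - m • S.α i := S.sref_apply i β
    have e2 : β - m • S.α i = - ∑ j, d j • S.α j := by rw [← e1, ← hdd, neg_neg]
    have : ∑ j, c j • S.α j + ∑ j, d j • S.α j - m • S.α i = 0 := by
      rw [← hcc]
      have := sub_eq_iff_eq_add.1 e2
      rw [this]; module
    rw [← this]
    rw [Finset.sum_congr rfl (fun j _ => by rw [sub_smul, add_smul])]
    rw [Finset.sum_sub_distrib, Finset.sum_add_distrib]
    congr 1
    rw [Finset.sum_congr rfl (fun j _ => by rw [ite_smul, zero_smul])]
    rw [Finset.sum_ite_eq' Finset.univ i (fun j => m • S.α j)]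
    simp
  have hz := Fintype.linearIndependent_iff.1 S.indep _ key
  have hcz : ∀ j, j ≠ i → c j = 0 := by
    intro j hj
    have h0 : c j + d j - (if j = i then m else 0) = 0 := hz j
    rw [if_neg hj] at h0
    have := hc j; have := hd j; linarith
  have hβeq : β = c i • S.α i := by
    rw [hcc, Finset.sum_eq_single_of_mem i (Finset.mem_univ i)]
    intro j _ hj
    rw [hcz j hj, zero_smul]
  refine ⟨c i, ?_, hβeq⟩
  rcases lt_or_eq_of_le (hc i) with h | h
  · exact h
  · exfalso
    apply S.ne_zero β hm
    rw [hβeq, ← h, zero_smul]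


/-- conjugation of a simple reflection: if `w (α j)` is a nonzero multiple of `α i`,
then `w s_j = s_i w`. -/
lemma conj_sref (w : V ≃ₗᵢ[ℝ] V) {i j : Fin r} {c : ℝ} (hc : c ≠ 0)
    (h : w (S.α j) = c • S.α i) :
    w * S.simpleReflection j = S.simpleReflection i * w := by
  ext x
  show w (S.simpleReflection j x) = S.simpleReflection i (w x)
  have h1 : ⟪x, S.α j⟫ = c * ⟪w x, S.α i⟫ := by
    rw [← w.inner_map_map x (S.α j), h, real_inner_smul_right]
  have h2 : ⟪S.α j, S.α j⟫ = c ^ 2 * ⟪S.α i, S.α i⟫ := by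
    rw [← w.inner_map_map (S.α j) (S.α j), h, real_inner_smul_right, real_inner_smul_left]
    ring
  rw [S.sref_apply j, S.sref_apply i, map_sub, LinearIsometryEquiv.map_smul, h, h1, h2,
    smul_smul]
  congr 2
  have hi := ne_of_gt (S.inner_alpha_self_pos i)
  field_simp

/-- the exchange lemma -/
lemma exchangeAux : ∀ (l : List (Fin r)) (j : Fin r),
    ¬ S.IsPositiveRoot (S.word l (S.α j)) →
    ∃ m : List (Fin r), m.length + 1 = l.length ∧
      S.word m = S.word l * S.simpleReflection j := by
  intro l
  induction l with
  | nil =>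
    intro j h
    exact absurd (by simpa using S.alpha_pos j) h
  | cons i rest ih =>
    intro j h
    rw [S.word_cons] at h
    by_cases hp : S.IsPositiveRoot (S.word rest (S.α j))
    · obtain ⟨c, hc, hcc⟩ := S.sref_pos i hp (by exact h)
      have hconj := S.conj_sref (S.word rest) (ne_of_gt hc) hcc
      refine ⟨rest, by simp, ?_⟩
      rw [S.word_cons, mul_assoc, hconj, ← mul_assoc, S.sref_mul_self, one_mul]
    · obtain ⟨m, hm, hweq⟩ := ih j hp
      refine ⟨i :: m, by simp [← hm], ?_⟩
      rw [S.word_cons, S.word_cons, hweq, mul_assoc]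


lemma dominant_inner_alpha {η : V} (hη : S.IsDominant η) (i : Fin r) :
    0 ≤ ⟪η, S.α i⟫ := by
  have h := hη i
  rw [coroot, real_inner_smul_right] at h
  have ha := S.inner_alpha_self_pos i
  have key : (2 / ⟪S.α i, S.α i⟫ * ⟪η, S.α i⟫) * ⟪S.α i, S.α i⟫ = 2 * ⟪η, S.α i⟫ := by
    field_simp
  nlinarith

lemma dominant_inner_incone {η x : V} (hη : S.IsDominant η) (hx : S.InCone x) :
    0 ≤ ⟪η, x⟫ := by
  obtain ⟨c, hc, rfl⟩ := hx
  rw [inner_sum]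
  refine Finset.sum_nonneg fun i _ => ?_
  rw [real_inner_smul_right]
  exact mul_nonneg (hc i) (S.dominant_inner_alpha hη i)

/-- key theorem: for dominant `η`, `η - w η` lies in the cone spanned by the
simple roots. -/
theorem master {η : V} (hη : S.IsDominant η) :
    ∀ (n : ℕ) (l : List (Fin r)), l.length = n → S.InCone (η - S.word l η) := by
  intro n
  induction n using Nat.strong_induction_on with
  | _ n ih =>
    intro l hl
    rcases l.eq_nil_or_concat with rfl | ⟨m, j, rfl⟩
    · simpa using S.incone_zero
    · subst hl
      rw [S.word_concat]
      by_cases hp : S.IsPositiveRoot (S.word m (S.α j))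
      · set t : ℝ := 2 * ⟪η, S.α j⟫ / ⟪S.α j, S.α j⟫ with ht
        have key : η - (S.word m * S.simpleReflection j) η
            = (η - S.word m η) + t • (S.word m (S.α j)) := by
          have e1 : (S.word m * S.simpleReflection j) η
              = S.word m η - t • S.word m (S.α j) := by
            show S.word m (S.simpleReflection j η) = _
            rw [S.sref_apply, map_sub, LinearIsometryEquiv.map_smul]
          rw [e1]
          module
        have ht0 : 0 ≤ t := by
          have := S.dominant_inner_alpha hη j
          have := S.inner_alpha_self_pos j
          positivity
        rw [key]
        refine S.incone_add (ih m.length (by simp [List.length_concat]) m rfl) ?_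
        exact S.incone_smul ht0 (S.incone_of_pos hp)
      · obtain ⟨m₂, hlen, hw⟩ := S.exchangeAux m j hp
        rw [← hw]
        refine ih m₂.length ?_ m₂ rfl
        simp [List.length_concat]
        omega

/-- for dominant `ξ` and `η`, `⟪ξ, w η⟫ ≤ ⟪ξ, η⟫` for all `w` in the Weyl group. -/
theorem inner_orbit_le {w : V ≃ₗᵢ[ℝ] V} (hw : w ∈ S.weylGroup) {ξ η : V}
    (hξ : S.IsDominant ξ) (hη : S.IsDominant η) : ⟪ξ, w η⟫ ≤ ⟪ξ, η⟫ := by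
  obtain ⟨l, rfl⟩ := S.exists_word hw
  have h := S.dominant_inner_incone hξ (S.master hη l.length l rfl)
  rw [inner_sub_right] at h
  linarith


open Classical in
/-- the number of positive roots sent to non-positive roots -/
noncomputable def invCount (w : V ≃ₗᵢ[ℝ] V) : ℕ :=
  (S.Φ.filter fun β => S.IsPositiveRoot β ∧ ¬ S.IsPositiveRoot (w β)).card

open Classical in
lemma invCount_lt {w : V ≃ₗᵢ[ℝ] V} (hw : ∀ β ∈ S.Φ, w β ∈ S.Φ) (i : Fin r)
    (hni : ¬ S.IsPositiveRoot (w (S.α i))) :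
    S.invCount (w * S.simpleReflection i) < S.invCount w := by
  set A := (S.Φ.filter fun β => S.IsPositiveRoot β ∧
      ¬ S.IsPositiveRoot ((w * S.simpleReflection i) β)) with hA
  set B := (S.Φ.filter fun β => S.IsPositiveRoot β ∧ ¬ S.IsPositiveRoot (w β)) with hB
  have hmemB : S.α i ∈ B := by
    rw [hB, Finset.mem_filter]
    exact ⟨S.α_mem i, S.alpha_pos i, hni⟩
  have hinj : ∀ β ∈ A, S.simpleReflection i β ∈ B.erase (S.α i) := by
    intro β hβA
    rw [hA, Finset.mem_filter] at hβA
    obtain ⟨hβΦ, hβpos, hβneg⟩ := hβA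
    have hsΦ : S.simpleReflection i β ∈ S.Φ := S.sref_mem i hβΦ
    have hspos : S.IsPositiveRoot (S.simpleReflection i β) := by
      by_contra hcon
      obtain ⟨c, hc, rfl⟩ := S.sref_pos i hβpos hcon
      -- then w (s_i β) = c • (- w (α i)) which is a positive root, contradiction
      apply hβneg
      have hwa : w (S.α i) ∈ S.Φ := hw _ (S.α_mem i)
      have hnegpos : S.IsPositiveRoot (-(w (S.α i))) :=
        (S.pos_or_negpos hwa).resolve_left hni
      have he : (w * S.simpleReflection i) (c • S.α i) = c • (-(w (S.α i))) := by
        show w (S.simpleReflection i (c • S.α i)) = _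
        rw [LinearIsometryEquiv.map_smul, S.sref_alpha, LinearIsometryEquiv.map_smul,
          map_neg]
      rw [he]
      refine S.pos_smul (le_of_lt hc) hnegpos ?_
      rw [← he]
      exact hw _ (S.sref_mem i hβΦ)
    refine Finset.mem_erase.2 ⟨?_, ?_⟩
    · intro hcon
      have : β = - S.α i := by
        have := congrArg (S.simpleReflection i) hcon
        rw [S.sref_sref, S.sref_alpha] at this
        exact this
      rw [this] at hβpos
      exact S.not_pos_and_negpos (S.alpha_pos i) (by simpa using hβpos)
    · rw [hB, Finset.mem_filter]
      exact ⟨hsΦ, hspos, by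
        intro hcon
        apply hβneg
        have : (w * S.simpleReflection i) β = w (S.simpleReflection i β) := rfl
        rw [this] at *
        exact hcon⟩
  have hcard : A.card ≤ (B.erase (S.α i)).card := by
    refine Finset.card_le_card_of_injOn (fun β => S.simpleReflection i β) hinj ?_
    intro a _ b _ hab
    have := congrArg (S.simpleReflection i) hab
    rwa [S.sref_sref, S.sref_sref] at this
  calc S.invCount (w * S.simpleReflection i) = A.card := rfl
    _ ≤ (B.erase (S.α i)).card := hcard
    _ < B.card := Finset.card_erase_lt_of_mem hmemB


lemma sref_fix {lam : V} {i : Fin r} (h : ⟪lam, S.α i⟫ = 0) :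
    S.simpleReflection i lam = lam := by
  rw [S.sref_apply, h]
  simp

lemma minRep (lam : V) (I : Finset (Fin r)) (hfix : ∀ i ∈ I, ⟪lam, S.α i⟫ = 0) :
    ∀ (n : ℕ) (w : V ≃ₗᵢ[ℝ] V), w ∈ S.weylGroup → S.invCount w ≤ n →
      ∃ w' ∈ S.weylGroup, w' lam = w lam ∧ ∀ i ∈ I, S.IsPositiveRoot (w' (S.α i)) := by
  intro n
  induction n with
  | zero =>
    intro w hwW hwn
    by_cases hall : ∀ i ∈ I, S.IsPositiveRoot (w (S.α i))
    · exact ⟨w, hwW, rfl, hall⟩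
    · push_neg at hall
      obtain ⟨i, hiI, hni⟩ := hall
      have := S.invCount_lt (fun β hβ => S.mem_maps_root hwW hβ) i hni
      omega
  | succ n ih =>
    intro w hwW hwn
    by_cases hall : ∀ i ∈ I, S.IsPositiveRoot (w (S.α i))
    · exact ⟨w, hwW, rfl, hall⟩
    · push_neg at hall
      obtain ⟨i, hiI, hni⟩ := hall
      have hlt := S.invCount_lt (fun β hβ => S.mem_maps_root hwW hβ) i hni
      obtain ⟨w', hw'W, hw'lam, hw'pos⟩ :=
        ih (w * S.simpleReflection i) (mul_mem hwW (S.sref_mem_weylGroup i)) (by omega)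
      refine ⟨w', hw'W, ?_, hw'pos⟩
      rw [hw'lam]
      show w (S.simpleReflection i lam) = w lam
      rw [S.sref_fix (hfix i hiI)]

end SimpleSystem

/-- Lemma 1, first equality case: if `λ1 ∈ Q_I^+`, `λ2 ∈ Q_I^{++}`, `μ1, μ2` are
subdominant to `λ1, λ2` respectively and `⟪μ1, μ2⟫ = ⟪λ1, λ2⟫`, then `μ1 = w λ1`
for some `w` in the Weyl group sending `α i` to a positive root for every `i ∈ I`
(i.e. `w ∈ W^I`, a minimal length coset representative of `W/W_I`). -/
theorem exists_minimal_rep_of_inner_eq {V : Type*} [NormedAddCommGroup V]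
    [InnerProductSpace ℝ V] [FiniteDimensional ℝ V] {r : ℕ}
    (S : SimpleSystem V r) (I : Finset (Fin r)) {lam1 lam2 mu1 mu2 : V}
    (h1 : S.MemQplus I lam1) (h2 : S.MemQplusplus I lam2)
    (hm1 : S.IsSubdominant lam1 mu1) (hm2 : S.IsSubdominant lam2 mu2)
    (heq : ⟪mu1, mu2⟫ = ⟪lam1, lam2⟫) :
    ∃ w ∈ S.weylGroup, mu1 = w lam1 ∧ ∀ i ∈ I, S.IsPositiveRoot (w (S.α i)) := by

  classical
  obtain ⟨w1, hw1W, hdom1, c, hc0, hc⟩ := hm1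
  obtain ⟨w2, hw2W, hdom2, d, hd0, hd⟩ := hm2
  have hlam1dom : S.IsDominant lam1 := fun i => by
    obtain ⟨n, hn⟩ := (h1 i).1
    rw [hn]; exact Nat.cast_nonneg n
  have hlam2dom : S.IsDominant lam2 := fun i => by
    by_cases hi : i ∈ I
    · rw [(h2 i).2 hi]
    · obtain ⟨n, _, hn⟩ := (h2 i).1 hi
      rw [hn]; exact Nat.cast_nonneg n
  set ν1 := w1 mu1 with hν1
  set ν2 := w2 mu2 with hν2
  have hu : (w2 * w1⁻¹) ν1 = w2 mu1 := by
    show w2 (w1⁻¹ (w1 mu1)) = w2 mu1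
    congr 1
    exact w1.symm_apply_apply mu1
  have huW : w2 * w1⁻¹ ∈ S.weylGroup := mul_mem hw2W (inv_mem hw1W)
  have E1 : ⟪mu1, mu2⟫ = ⟪(w2 * w1⁻¹) ν1, ν2⟫ := by
    rw [hu]; exact (w2.inner_map_map mu1 mu2).symm
  have E2 : ⟪ν2, (w2 * w1⁻¹) ν1⟫ ≤ ⟪ν2, ν1⟫ := S.inner_orbit_le huW hdom2 hdom1
  have X2 : 0 ≤ ⟪ν1, lam2 - ν2⟫ := by
    rw [hd, inner_sum]
    refine Finset.sum_nonneg fun i _ => ?_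
    rw [real_inner_smul_right]
    exact mul_nonneg (hd0 i) (hdom1 i)
  have X1exp : ⟪lam1 - ν1, lam2⟫ = ∑ i, c i * ⟪lam2, S.coroot i⟫ := by
    rw [hc, sum_inner]
    exact Finset.sum_congr rfl fun i _ => by
      rw [real_inner_smul_left, real_inner_comm]
  have X1nonneg : ∀ i, 0 ≤ c i * ⟪lam2, S.coroot i⟫ := fun i =>
    mul_nonneg (hc0 i) (hlam2dom i)
  have hchain : ∑ i, c i * ⟪lam2, S.coroot i⟫ ≤ 0 := by
    have b1 : ⟪ν2, (w2 * w1⁻¹) ν1⟫ = ⟪lam1, lam2⟫ := by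
      rw [real_inner_comm, ← E1, heq]
    have b2 : ⟪ν1, ν2⟫ = ⟪ν1, lam2⟫ - ⟪ν1, lam2 - ν2⟫ := by
      rw [inner_sub_right]; ring
    have b3 : ⟪ν1, lam2⟫ = ⟪lam1, lam2⟫ - ⟪lam1 - ν1, lam2⟫ := by
      rw [inner_sub_left]; ring
    have hcomm : ⟪ν1, ν2⟫ = ⟪ν2, ν1⟫ := real_inner_comm _ _
    have E2' : ⟪lam1, lam2⟫ ≤ ⟪ν1, ν2⟫ := by
      rw [hcomm, ← b1]; exact E2
    rw [← X1exp]
    linarith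
  have hsum0 : ∑ i, c i * ⟪lam2, S.coroot i⟫ = 0 :=
    le_antisymm hchain (Finset.sum_nonneg fun i _ => X1nonneg i)
  have hzero := (Finset.sum_eq_zero_iff_of_nonneg fun i _ => X1nonneg i).1 hsum0
  have hcI : ∀ i ∉ I, c i = 0 := by
    intro i hi
    obtain ⟨n, hn0, hn⟩ := (h2 i).1 hi
    have hpos : 0 < ⟪lam2, S.coroot i⟫ := by
      rw [hn]; exact_mod_cast hn0
    have := hzero i (Finset.mem_univ i)
    rcases mul_eq_zero.1 this with h | h
    · exact h
    · exact absurd h (ne_of_gt hpos)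
  -- now lam1 = ν1
  have hT : lam1 - ν1 = 0 := by
    have e : ⟪lam1 - ν1, lam1 - ν1⟫ = ∑ i, c i * ⟪lam1 - ν1, S.coroot i⟫ := by
      nth_rewrite 2 [hc]
      rw [inner_sum]
      exact Finset.sum_congr rfl fun i _ => by rw [real_inner_smul_right]
    have hle : ⟪lam1 - ν1, lam1 - ν1⟫ ≤ 0 := by
      rw [e]
      refine Finset.sum_nonpos fun i => ?_
      intro _
      by_cases hi : i ∈ I
      · have hterm : ⟪lam1 - ν1, S.coroot i⟫ ≤ 0 := by
          rw [inner_sub_left, (h1 i).2 hi]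
          have := hdom1 i
          linarith
        exact mul_nonpos_of_nonneg_of_nonpos (hc0 i) hterm
      · rw [hcI i hi, zero_mul]
    have hnorm : ‖lam1 - ν1‖ ^ 2 ≤ 0 := by
      rw [← real_inner_self_eq_norm_sq]; exact hle
    have : ‖lam1 - ν1‖ = 0 := by nlinarith [norm_nonneg (lam1 - ν1)]
    rwa [norm_eq_zero] at this
  have hlamν : lam1 = ν1 := by
    have := sub_eq_zero.1 hT
    exact this
  have hmu1 : mu1 = w1⁻¹ lam1 := by
    rw [hlamν, hν1]
    exact (w1.symm_apply_apply mu1).symm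
  have hfix : ∀ i ∈ I, ⟪lam1, S.α i⟫ = 0 := by
    intro i hi
    have h := (h1 i).2 hi
    rw [SimpleSystem.coroot, real_inner_smul_right] at h
    have ha := S.inner_alpha_self_pos i
    have h2a : (2 : ℝ) / ⟪S.α i, S.α i⟫ ≠ 0 := by positivity
    exact (mul_eq_zero.1 h).resolve_left h2a
  obtain ⟨w', hw'W, hw'lam, hw'pos⟩ :=
    S.minRep lam1 I hfix (S.invCount w1⁻¹) w1⁻¹ (inv_mem hw1W) le_rfl
  exact ⟨w', hw'W, by rw [hw'lam, ← hmu1], hw'pos⟩
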